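/- Let ℒ be a ccs class of countable scattered linear orders. Then the quasi-order ⊴^ℒ on countably infinite linear orders has no maximal element: for every countably infinite linear order L there is a countably infinite linear order L' with L ⊴^ℒ L' but not L' ⊴^ℒ L. -/

import Mathlib

universe u v w x

/-- A `K`-convex partition of `L`: a partition of `L` into nonempty pieces indexed by `K`
such that `k < k'` iff every element of `P k` is below every element of `P k'`. -/
def IsConvexPartition {K : Type u} {L : Type v} [LinearOrder K] [LinearOrder L]
    (P : K → Set L) : Prop :=
  (∀ k, (P k).Nonempty) ∧ (∀ y : L, ∃! k, y ∈ P k) ∧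
    ∀ k k' : K, k < k' ↔ ∀ a ∈ P k, ∀ b ∈ P k', a < b

/-- `ℒ`-convex embeddability: `L ⊴^ℒ L'` iff there are `K ∈ ℒ`, a `K`-convex partition of `L`,
and an order embedding of `L` into `L'` mapping each piece onto a convex set. -/
def LCE (ℒ : Set LinOrd.{u}) (L : Type v) (L' : Type w)
    [LinearOrder L] [LinearOrder L'] : Prop :=
  ∃ K ∈ ℒ, ∃ P : ↥K → Set L, IsConvexPartition P ∧
    ∃ f : L ↪o L', ∀ k : ↥K, (⇑f '' P k).OrdConnected

/-- `ℒ` is closed under convex sums (ccs). -/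
def CCS (ℒ : Set LinOrd.{u}) : Prop :=
  ∀ K ∈ ℒ, ∀ K' ∈ ℒ, ∀ P : ↥K → Set ↥K',
    (∀ k, (P k).Nonempty) → (∀ k, (P k).OrdConnected) →
    (∀ k₀ k₁ : ↥K, k₀ < k₁ → ∀ a ∈ P k₀, ∀ b ∈ P k₁, a ≤ b) →
    ∃ M ∈ ℒ, Nonempty (Lex ((k : ↥K) × ↥(P k)) ≃o ↥M)

open Set in
/-- Auxiliary: for every countable linear order there is a countable nonempty linear order
that is not isomorphic to any convex (order-connected) subset of it. -/
lemma exists_nonconvex (L : Type) [LinearOrder L] [Countable L] [Nonempty L] :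
    ∃ (B : Type) (_ : LinearOrder B), Countable B ∧ Nonempty B ∧
      ∀ F : B ↪o L, ¬ (Set.range ⇑F).OrdConnected := by
  classical
  set W : L → Set L := fun m => {x | m ≤ x ∧ (Set.Icc m x).WellFoundedOn (· < ·)} with hWdef
  have wfW : ∀ m, (W m).WellFoundedOn (· < ·) := by
    intro m
    rw [Set.wellFoundedOn_iff_no_descending_seq]
    intro f hf
    have hle : ∀ n, f n ≤ f 0 := by
      intro n
      induction n with
      | zero => exact le_rfl
      | succ k ih => exact le_of_lt (lt_of_lt_of_le (f.map_rel_iff.2 (Nat.lt_succ_self k)) ih)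
    have h0 := (hf 0).2
    rw [Set.wellFoundedOn_iff_no_descending_seq] at h0
    exact h0 f fun n => ⟨(hf n).1, hle n⟩
  haveI hWF : ∀ m, WellFoundedLT (W m) :=
    fun m => ⟨Subrelation.wf (fun {a b} (h : a < b) => (show (a : L) < (b : L) from h)) (wfW m)⟩
  let α : L → Ordinal.{0} := fun m => Ordinal.type ((· < ·) : W m → W m → Prop)
  have hα : ∀ m, α m < (Cardinal.aleph 1).ord := by
    intro m
    rw [Cardinal.lt_ord, Ordinal.card_type]
    exact Cardinal.mk_le_aleph0.trans_lt Cardinal.aleph0_lt_aleph_one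
  have hsup : (⨆ m, α m) < (Cardinal.aleph 1).ord := by
    apply Ordinal.iSup_lt_ord_lift _ hα
    rw [Cardinal.isRegular_aleph_one.cof_eq]
    exact ((Cardinal.lift_id (Cardinal.mk L)).le.trans Cardinal.mk_le_aleph0).trans_lt
      Cardinal.aleph0_lt_aleph_one
  set β : Ordinal.{0} := (⨆ m, α m) + 1 with hβdef
  have hβ : β < (Cardinal.aleph 1).ord := by
    rw [hβdef, Ordinal.add_one_eq_succ]
    exact (Cardinal.isSuccLimit_ord (Cardinal.aleph0_le_aleph 1)).succ_lt hsup
  have hBne : Nonempty β.ToType := by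
    rw [Ordinal.nonempty_toType_iff, hβdef, Ordinal.add_one_eq_succ]
    exact Order.succ_ne_bot _
  have hBcount : Countable β.ToType := by
    rw [← Cardinal.mk_le_aleph0_iff, Cardinal.mk_toType]
    have := Cardinal.lt_ord.1 hβ
    rwa [← Cardinal.succ_aleph0, Order.lt_succ_iff] at this
  refine ⟨β.ToType, inferInstance, hBcount, hBne, ?_⟩
  intro F hconn
  obtain ⟨b₀, -, hb₀⟩ := (wellFounded_lt (α := β.ToType)).has_min Set.univ Set.univ_nonempty
  have hb₀le : ∀ b, b₀ ≤ b := fun b => not_lt.1 fun h => hb₀ b (Set.mem_univ b) h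
  set m := F b₀ with hm
  have hrF : (Set.range ⇑F).WellFoundedOn (· < ·) := by
    rw [Set.wellFoundedOn_range]
    exact Subrelation.wf (fun {a b} (h : F a < F b) => F.lt_iff_lt.1 h)
      (wellFounded_lt (α := β.ToType))
  have hsub : Set.range ⇑F ⊆ W m := by
    rintro x ⟨b, rfl⟩
    refine ⟨F.monotone (hb₀le b), ?_⟩
    exact hrF.subset (hconn.out ⟨b₀, rfl⟩ ⟨b, rfl⟩)
  let E : ((· < ·) : β.ToType → β.ToType → Prop) ↪r ((· < ·) : W m → W m → Prop) :=
    { toFun := fun b => ⟨F b, hsub ⟨b, rfl⟩⟩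
      inj' := fun a b h => F.injective (congrArg Subtype.val h)
      map_rel_iff' := by
        intro a b
        exact Subtype.mk_lt_mk.trans F.lt_iff_lt }
  haveI i1 : IsWellOrder β.ToType (· < ·) := @isWellOrder_lt _ _ inferInstance
  haveI i2 : IsWellOrder (W m) (· < ·) := inferInstance
  have h1 : β ≤ α m := by
    rw [← Ordinal.type_toType β]
    exact (Ordinal.type_le_iff' (r := ((· < ·) : β.ToType → β.ToType → Prop))
      (s := ((· < ·) : W m → W m → Prop))).2 ⟨E⟩
  have h2 : α m ≤ ⨆ m', α m' := Ordinal.le_iSup α m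
  have h3 := h1.trans h2
  rw [hβdef, Ordinal.add_one_eq_succ, Order.succ_le_iff] at h3
  exact lt_irrefl _ h3


/-- For a ccs class `ℒ` of countable scattered linear orders, `⊴^ℒ` has no maximal element
among countably infinite linear orders. -/
theorem stmt_16 (ℒ : Set LinOrd.{0}) (hne : ℒ.Nonempty)
    (hmem : ∀ A ∈ ℒ, Nonempty ↥A ∧ Countable ↥A ∧ ¬ Nonempty (ℚ ↪o ↥A))
    (hdc : ∀ A ∈ ℒ, ∀ B : LinOrd.{0}, Nonempty ↥B → Countable ↥B →
      Nonempty (↥B ↪o ↥A) → B ∈ ℒ)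
    (hccs : CCS ℒ) :
    ∀ L : LinOrd.{0}, Countable ↥L → Infinite ↥L →
      ∃ L' : LinOrd.{0}, Countable ↥L' ∧ Infinite ↥L' ∧
        LCE ℒ ↥L ↥L' ∧ ¬ LCE ℒ ↥L' ↥L := by
  classical
  intro L hcount hinf
  haveI := hcount; haveI := hinf
  obtain ⟨B, hBlin, hBcount, hBne, hB⟩ := exists_nonconvex ↥L
  letI := hBlin; haveI := hBcount; haveI := hBne
  let M := (↥L) ⊕ₗ B
  let x₀ : M := toLex (Sum.inl (Classical.arbitrary ↥L))
  haveI : Countable M := Countable.of_equiv _ (toLex (α := (↥L) ⊕ B))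
  haveI hQMc : Countable (ℚ ×ₗ M) := Countable.of_equiv _ (toLex (α := ℚ × M))
  haveI hQMi : Infinite (ℚ ×ₗ M) := Infinite.of_injective (fun q : ℚ => toLex (q, x₀))
    (fun a b h => congrArg Prod.fst (ofLex.injective h))
  refine ⟨LinOrd.of (ℚ ×ₗ M), hQMc, hQMi, ?_, ?_⟩
  · -- L ⊴^ℒ L'
    obtain ⟨A, hA⟩ := hne
    obtain ⟨⟨a₀⟩, -, -⟩ := hmem A hA
    have hK1 : LinOrd.of PUnit ∈ ℒ := hdc A hA (LinOrd.of PUnit) ⟨⟨⟩⟩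
      (inferInstanceAs (Countable PUnit))
      ⟨⟨⟨fun _ => a₀, fun a b _ => Subsingleton.elim (α := PUnit) a b⟩, by
        intro a b
        simp⟩⟩
    refine ⟨LinOrd.of PUnit, hK1, fun _ => Set.univ, ⟨?_, ?_, ?_⟩, ?_⟩
    · intro k; exact Set.univ_nonempty
    · intro y
      exact ⟨PUnit.unit, Set.mem_univ y, fun j _ => Subsingleton.elim (α := PUnit) j _⟩
    · intro k k'
      constructor
      · intro h
        rw [Subsingleton.elim (α := PUnit) k k'] at h
        exact absurd h (lt_irrefl _)
      · intro h
        obtain ⟨y⟩ : Nonempty ↥L := inferInstance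
        exact absurd (h y (Set.mem_univ y) y (Set.mem_univ y)) (lt_irrefl y)
    · refine ⟨OrderEmbedding.ofStrictMono
        (fun x : ↥L => toLex ((0 : ℚ), toLex (Sum.inl x : (↥L) ⊕ B))) ?_, ?_⟩
      · intro a b hab
        exact (Prod.Lex.toLex_lt_toLex).2 (Or.inr ⟨rfl, Sum.Lex.inl_lt_inl_iff.2 hab⟩)
      · intro k
        rw [Set.image_univ]
        constructor
        rintro x ⟨a, rfl⟩ y ⟨b, rfl⟩ z hz
        simp only [OrderEmbedding.coe_ofStrictMono] at hz ⊢
        have h1 := (Prod.Lex.toLex_le_toLex (x := ((0 : ℚ), toLex (Sum.inl a : (↥L) ⊕ B))) (y := ofLex z)).1 hz.1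
        have h2 := (Prod.Lex.toLex_le_toLex (x := ofLex z) (y := ((0 : ℚ), toLex (Sum.inl b : (↥L) ⊕ B)))).1 hz.2
        have hz1 : (ofLex z).1 = 0 := by
          rcases h1 with h1 | ⟨h1, -⟩
          · rcases h2 with h2 | ⟨h2, -⟩
            · exact absurd (h1.trans h2) (lt_irrefl _)
            · exact h2
          · exact h1.symm
        have h1' : toLex (Sum.inl a : (↥L) ⊕ B) ≤ (ofLex z).2 := by
          rcases h1 with h1 | ⟨-, h1⟩
          · exact absurd (h1.trans_eq hz1) (lt_irrefl _)
          · exact h1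
        have h2' : (ofLex z).2 ≤ toLex (Sum.inl b : (↥L) ⊕ B) := by
          rcases h2 with h2 | ⟨-, h2⟩
          · exact absurd (hz1.symm.trans_lt h2) (lt_irrefl _)
          · exact h2
        rcases hc : ofLex ((ofLex z).2) with c | c
        · have hzc : (ofLex z).2 = toLex (Sum.inl c) := congrArg toLex hc
          refine ⟨c, ?_⟩
          show toLex ((0 : ℚ), toLex (Sum.inl c : (↥L) ⊕ B)) = z
          have : ofLex z = ((0 : ℚ), toLex (Sum.inl c : (↥L) ⊕ B)) :=
            Prod.ext hz1 hzc
          exact (congrArg toLex this).symm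
        · have hzc : (ofLex z).2 = toLex (Sum.inr c) := congrArg toLex hc
          rw [hzc] at h2'
          exact absurd h2' Sum.Lex.not_inr_le_inl
  · -- ¬ L' ⊴^ℒ L
    rintro ⟨K, hK, P, ⟨hPne, hPuniq, hPord⟩, f, hconv⟩
    obtain ⟨-, -, hKscat⟩ := hmem K hK
    let g : ℚ → ↥K := fun q => (hPuniq (toLex (q, x₀))).choose
    have hg : ∀ q, (toLex (q, x₀) : ℚ ×ₗ M) ∈ P (g q) :=
      fun q => (hPuniq (toLex (q, x₀))).choose_spec.1
    have hPconv : ∀ k, (P k).OrdConnected := by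
      intro k
      constructor
      rintro a ha b hb c hc
      obtain ⟨k', hk'⟩ := (hPuniq c).exists
      rcases lt_trichotomy k' k with h | h | h
      · exact absurd ((hPord k' k).1 h c hk' a ha) (not_lt.2 hc.1)
      · rwa [h] at hk'
      · exact absurd ((hPord k k').1 h b hb c hk') (not_lt.2 hc.2)
    have hgmono : Monotone g := by
      intro q q' hqq'
      rcases eq_or_lt_of_le hqq' with rfl | hlt
      · exact le_rfl
      rcases lt_trichotomy (g q) (g q') with h | h | h
      · exact h.le
      · exact h.le
      · exfalso
        have hlex := (hPord _ _).1 h _ (hg q') _ (hg q)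
        rcases (Prod.Lex.toLex_lt_toLex (x := (q', x₀)) (y := (q, x₀))).1 hlex with h' | ⟨-, h'⟩
        · exact lt_asymm hlt h'
        · exact lt_irrefl _ h'
    by_cases hginj : Function.Injective g
    · exact hKscat ⟨OrderEmbedding.ofStrictMono g (hgmono.strictMono_of_injective hginj)⟩
    have main : ∀ q q' : ℚ, q < q' → g q = g q' → False := by
      intro q q' hlt hgeq
      have hq'mem : (toLex (q', x₀) : ℚ ×ₗ M) ∈ P (g q) := by rw [hgeq]; exact hg q'
      have hqmem : (toLex (q, x₀) : ℚ ×ₗ M) ∈ P (g q) := hg q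
      obtain ⟨r, hr1, hr2⟩ := exists_between hlt
      have hfiber : ∀ z : M, (toLex (r, z) : ℚ ×ₗ M) ∈ P (g q) := by
        intro z
        refine (hPconv (g q)).out hqmem hq'mem ⟨?_, ?_⟩
        · exact le_of_lt ((Prod.Lex.toLex_lt_toLex (x := (q, x₀)) (y := (r, z))).2 (Or.inl hr1))
        · exact le_of_lt ((Prod.Lex.toLex_lt_toLex (x := (r, z)) (y := (q', x₀))).2 (Or.inl hr2))
      have hsm : StrictMono (fun b : B => f (toLex (r, toLex (Sum.inr b : (↥L) ⊕ B)))) := by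
        intro a b hab
        apply f.strictMono
        exact (Prod.Lex.toLex_lt_toLex).2 (Or.inr ⟨rfl, Sum.Lex.inr_lt_inr_iff.2 hab⟩)
      refine hB (OrderEmbedding.ofStrictMono _ hsm) ?_
      constructor
      rintro x ⟨a, rfl⟩ y ⟨b, rfl⟩ z hz
      simp only [OrderEmbedding.coe_ofStrictMono] at hz ⊢
      have hz' : z ∈ ⇑f '' P (g q) := (hconv (g q)).out ⟨_, hfiber _, rfl⟩ ⟨_, hfiber _, rfl⟩ hz
      obtain ⟨w, hw, rfl⟩ := hz'
      have h1 : (toLex (r, toLex (Sum.inr a : (↥L) ⊕ B)) : ℚ ×ₗ M) ≤ w := f.le_iff_le.1 hz.1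
      have h2 : w ≤ (toLex (r, toLex (Sum.inr b : (↥L) ⊕ B)) : ℚ ×ₗ M) := f.le_iff_le.1 hz.2
      have h1'' := (Prod.Lex.toLex_le_toLex (x := (r, toLex (Sum.inr a : (↥L) ⊕ B))) (y := ofLex w)).1 h1
      have h2'' := (Prod.Lex.toLex_le_toLex (x := ofLex w) (y := (r, toLex (Sum.inr b : (↥L) ⊕ B)))).1 h2
      have hw1 : (ofLex w).1 = r := by
        rcases h1'' with h1' | ⟨h1', -⟩
        · rcases h2'' with h2' | ⟨h2', -⟩
          · exact absurd (h1'.trans h2') (lt_irrefl _)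
          · exact h2'
        · exact h1'.symm
      have h1' : toLex (Sum.inr a : (↥L) ⊕ B) ≤ (ofLex w).2 := by
        rcases h1'' with h1' | ⟨-, h1'⟩
        · exact absurd (h1'.trans_eq hw1) (lt_irrefl _)
        · exact h1'
      have h2' : (ofLex w).2 ≤ toLex (Sum.inr b : (↥L) ⊕ B) := by
        rcases h2'' with h2' | ⟨-, h2'⟩
        · exact absurd (hw1.symm.trans_lt h2') (lt_irrefl _)
        · exact h2'
      rcases hc : ofLex ((ofLex w).2) with c | c
      · have hzc : (ofLex w).2 = toLex (Sum.inl c) := congrArg toLex hc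
        rw [hzc] at h1'
        exact absurd h1' Sum.Lex.not_inr_le_inl
      · have hzc : (ofLex w).2 = toLex (Sum.inr c) := congrArg toLex hc
        refine ⟨c, ?_⟩
        show f (toLex (r, toLex (Sum.inr c : (↥L) ⊕ B))) = f w
        congr 1
        have : ofLex w = (r, toLex (Sum.inr c : (↥L) ⊕ B)) := Prod.ext hw1 hzc
        exact (congrArg toLex this).symm
    apply hginj
    intro a b hab
    by_contra hne'
    rcases Ne.lt_or_gt hne' with h' | h'
    · exact main a b h' hab
    · exact main b a h' hab.symm
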